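/- Let G be a connected graph with degree sequence π and α ∈ [0,1), and suppose ρ(A_α(G)) is maximal among all connected graphs with degree sequence π. Let X be a unit Perron eigenvector of A_α(G). Then for any two vertices u, v: if x_u ≥ x_v and the ordering places u before v, then d(u) ≥ d(v); and if x_u = x_v, then d(u) = d(v). -/

import Mathlib

open Matrix Finset SimpleGraph
open scoped Classical

/-- Degree of a vertex (no decidability assumptions). -/
noncomputable def deg {V : Type*} (G : SimpleGraph V) (v : V) : ℕ :=
  (G.neighborSet v).ncard

/-- The matrix `A_alpha(G) = alpha D(G) + (1-alpha) A(G)`. -/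
noncomputable def Aalpha {V : Type*} [Fintype V] (G : SimpleGraph V) (α : ℝ) :
    Matrix V V ℝ :=
  fun i j => if i = j then α * (deg G i : ℝ) else if G.Adj i j then 1 - α else 0

/-- The spectral radius (largest eigenvalue) of a real symmetric matrix,
as the supremum of its eigenvalues. -/
noncomputable def specRad {V : Type*} [Fintype V] (M : Matrix V V ℝ) : ℝ :=
  sSup {t : ℝ | ∃ x : V → ℝ, x ≠ 0 ∧ M.mulVec x = t • x}

lemma deg_eq_card {n : ℕ} (G : SimpleGraph (Fin n)) (v : Fin n) :
    deg G v = (univ.filter (fun w => G.Adj v w)).card := by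
  have h : G.neighborSet v = ↑(univ.filter (fun w => G.Adj v w)) := by
    ext w; simp [SimpleGraph.neighborSet]
  rw [deg, h, Set.ncard_coe_finset]

/-- The switched graph: edges from `v` to `W` moved to be edges from `u` to `W`. -/
def swG {n : ℕ} (G : SimpleGraph (Fin n)) (u v : Fin n) (W : Finset (Fin n)) :
    SimpleGraph (Fin n) where
  Adj a b := a ≠ b ∧ ((G.Adj a b ∧ ¬(a = v ∧ b ∈ W) ∧ ¬(b = v ∧ a ∈ W)) ∨
    (a = u ∧ b ∈ W) ∨ (b = u ∧ a ∈ W))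
  symm := by
    constructor
    intro a b h
    obtain ⟨h1, h2⟩ := h
    refine ⟨h1.symm, ?_⟩
    rcases h2 with ⟨hg, hv1, hv2⟩ | ⟨ha, hb⟩ | ⟨ha, hb⟩
    · exact Or.inl ⟨hg.symm, hv2, hv1⟩
    · exact Or.inr (Or.inr ⟨ha, hb⟩)
    · exact Or.inr (Or.inl ⟨ha, hb⟩)
  loopless := by constructor; rintro a ⟨h, -⟩; exact h rfl

section swGfacts

variable {n : ℕ} {G : SimpleGraph (Fin n)} {u v : Fin n} {W : Finset (Fin n)}
  (huv : u ≠ v) (hW : ∀ w ∈ W, G.Adj v w ∧ ¬ G.Adj u w ∧ w ≠ u)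

include hW

lemma swG_u_notmem : u ∉ W := fun h => (hW u h).2.2 rfl

lemma swG_v_notmem : v ∉ W := fun h => ((hW v h).1).ne' rfl

include huv

lemma swG_adj_u (b : Fin n) : (swG G u v W).Adj u b ↔ (G.Adj u b ∨ b ∈ W) := by
  constructor
  · rintro ⟨hne, ⟨hg, -, -⟩ | ⟨-, hbW⟩ | ⟨-, haW⟩⟩
    · exact Or.inl hg
    · exact Or.inr hbW
    · exact absurd haW (swG_u_notmem hW)
  · rintro (hg | hbW)
    · exact ⟨hg.ne, Or.inl ⟨hg, fun h => huv h.1, fun h => (swG_u_notmem hW) h.2⟩⟩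
    · exact ⟨fun h => (hW b hbW).2.2 h.symm, Or.inr (Or.inl ⟨rfl, hbW⟩)⟩

lemma swG_adj_v (b : Fin n) : (swG G u v W).Adj v b ↔ (G.Adj v b ∧ b ∉ W) := by
  constructor
  · rintro ⟨hne, ⟨hg, hv1, -⟩ | ⟨hvu, -⟩ | ⟨-, haW⟩⟩
    · exact ⟨hg, fun h => hv1 ⟨rfl, h⟩⟩
    · exact absurd hvu.symm huv
    · exact absurd haW (swG_v_notmem hW)
  · rintro ⟨hg, hbW⟩
    exact ⟨hg.ne, Or.inl ⟨hg, fun h => hbW h.2, fun h => (swG_v_notmem hW) h.2⟩⟩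

lemma swG_adj_other {a : Fin n} (hau : a ≠ u) (hav : a ≠ v) (b : Fin n) :
    (swG G u v W).Adj a b ↔ ((G.Adj a b ∧ ¬(b = v ∧ a ∈ W)) ∨ (b = u ∧ a ∈ W)) := by
  constructor
  · rintro ⟨hne, ⟨hg, -, hv2⟩ | ⟨hau', -⟩ | ⟨hbu, haW⟩⟩
    · exact Or.inl ⟨hg, hv2⟩
    · exact absurd hau' hau
    · exact Or.inr ⟨hbu, haW⟩
  · rintro (⟨hg, hv2⟩ | ⟨hbu, haW⟩)
    · exact ⟨hg.ne, Or.inl ⟨hg, fun h => hav h.1, hv2⟩⟩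
    · refine ⟨?_, Or.inr (Or.inr ⟨hbu, haW⟩)⟩
      rw [hbu]; exact fun h => hau h

lemma swG_deg_u : deg (swG G u v W) u = deg G u + W.card := by
  rw [deg_eq_card, deg_eq_card]
  have h1 : univ.filter (fun w => (swG G u v W).Adj u w)
      = univ.filter (fun w => G.Adj u w) ∪ W := by
    ext w
    simp only [Finset.mem_filter, Finset.mem_union, Finset.mem_univ, true_and]
    rw [swG_adj_u huv hW]
  rw [h1, Finset.card_union_of_disjoint]
  rw [Finset.disjoint_left]
  intro w hw hwW
  exact (hW w hwW).2.1 (by simpa using hw)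

lemma swG_deg_v : deg (swG G u v W) v = deg G v - W.card := by
  rw [deg_eq_card, deg_eq_card]
  have h1 : univ.filter (fun w => (swG G u v W).Adj v w)
      = univ.filter (fun w => G.Adj v w) \ W := by
    ext w
    simp only [Finset.mem_filter, Finset.mem_sdiff, Finset.mem_univ, true_and]
    rw [swG_adj_v huv hW]
  rw [h1, Finset.card_sdiff_of_subset]
  intro w hwW
  simp only [Finset.mem_filter, Finset.mem_univ, true_and]
  exact (hW w hwW).1

lemma swG_deg_other {a : Fin n} (hau : a ≠ u) (hav : a ≠ v) :
    deg (swG G u v W) a = deg G a := by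
  rw [deg_eq_card, deg_eq_card]
  by_cases haW : a ∈ W
  · have h1 : univ.filter (fun w => (swG G u v W).Adj a w)
        = (univ.filter (fun w => G.Adj a w) \ {v}) ∪ {u} := by
      ext b
      simp only [Finset.mem_filter, Finset.mem_union, Finset.mem_sdiff, Finset.mem_univ,
        true_and, Finset.mem_singleton]
      rw [swG_adj_other huv hW hau hav]
      constructor
      · rintro (⟨hg, hnv⟩ | ⟨hbu, -⟩)
        · exact Or.inl ⟨hg, fun h => hnv ⟨h, haW⟩⟩
        · exact Or.inr hbu
      · rintro (⟨hg, hbv⟩ | hbu)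
        · exact Or.inl ⟨hg, fun h => hbv h.1⟩
        · exact Or.inr ⟨hbu, haW⟩
    rw [h1, Finset.card_union_of_disjoint, Finset.card_sdiff_of_subset]
    · have hv_mem : v ∈ univ.filter (fun w => G.Adj a w) := by
        simp only [Finset.mem_filter, Finset.mem_univ, true_and]
        exact ((hW a haW).1).symm
      have : 1 ≤ (univ.filter (fun w => G.Adj a w)).card :=
        Finset.card_pos.mpr ⟨v, hv_mem⟩
      simp only [Finset.card_singleton]
      omega
    · intro w hwW
      simp only [Finset.mem_singleton] at hwW
      subst hwW
      simp only [Finset.mem_filter, Finset.mem_univ, true_and]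
      exact ((hW a haW).1).symm
    · rw [Finset.disjoint_left]
      intro b hb hbu
      simp only [Finset.mem_sdiff, Finset.mem_filter, Finset.mem_univ, true_and] at hb
      simp only [Finset.mem_singleton] at hbu
      subst hbu
      exact (hW a haW).2.1 hb.1.symm
  · have h1 : univ.filter (fun w => (swG G u v W).Adj a w)
        = univ.filter (fun w => G.Adj a w) := by
      ext b
      simp only [Finset.mem_filter, Finset.mem_univ, true_and]
      rw [swG_adj_other huv hW hau hav]
      constructor
      · rintro (⟨hg, -⟩ | ⟨-, haW'⟩)
        · exact hg
        · exact absurd haW' haW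
      · intro hg
        exact Or.inl ⟨hg, fun h => haW h.2⟩
    rw [h1]

end swGfacts

section swGconn

variable {n : ℕ} {G : SimpleGraph (Fin n)} {u v : Fin n} {W : Finset (Fin n)}
  (huv : u ≠ v) (hW : ∀ w ∈ W, G.Adj v w ∧ ¬ G.Adj u w ∧ w ≠ u)

include huv hW

/-- A walk in `G` avoiding `v` gives reachability in the switched graph. -/
lemma swG_reach_of_walk_avoid {a b : Fin n} (p : G.Walk a b) (hp : v ∉ p.support) :
    (swG G u v W).Reachable a b := by
  induction p with
  | nil => exact Reachable.refl _
  | @cons x y z h q ih =>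
    simp only [SimpleGraph.Walk.support_cons, List.mem_cons] at hp
    push_neg at hp
    obtain ⟨hxv, hq⟩ := hp
    have hxv' : x ≠ v := fun hc => hxv hc.symm
    have hyv : y ≠ v := by
      intro hcontr
      exact absurd (hcontr ▸ q.start_mem_support) hq
    have hadj : (swG G u v W).Adj x y :=
      ⟨h.ne, Or.inl ⟨h, fun h' => hxv' h'.1, fun h' => hyv h'.1⟩⟩
    exact hadj.reachable.trans (ih hq)

lemma swG_reach_aux {a b : Fin n} (p : G.Walk a b)
    (hvu : (swG G u v W).Reachable v u) (hb : (swG G u v W).Reachable b u) :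
    (swG G u v W).Reachable a u := by
  induction p with
  | nil => exact hb
  | @cons x y z h q ih =>
    have hy : (swG G u v W).Reachable y u := ih hb
    by_cases hH : (swG G u v W).Adj x y
    · exact hH.reachable.trans hy
    · have hcases : (x = v ∧ y ∈ W) ∨ (y = v ∧ x ∈ W) := by
        by_contra hcon
        push_neg at hcon
        apply hH
        exact ⟨h.ne, Or.inl ⟨h, fun h' => hcon.1 h'.1 h'.2, fun h' => hcon.2 h'.1 h'.2⟩⟩
      rcases hcases with ⟨hxv, -⟩ | ⟨-, hxW⟩
      · exact hxv ▸ hvu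
      · have : (swG G u v W).Adj u x := (swG_adj_u huv hW x).mpr (Or.inr hxW)
        exact this.symm.reachable

lemma swG_connected (hG : G.Connected) (hvu : (swG G u v W).Reachable v u) :
    (swG G u v W).Connected := by
  have reach_u : ∀ a : Fin n, (swG G u v W).Reachable a u := by
    intro a
    obtain ⟨p⟩ := hG.preconnected a u
    exact swG_reach_aux huv hW p hvu (Reachable.refl u)
  rw [SimpleGraph.connected_iff]
  exact ⟨fun a b => (reach_u a).trans (reach_u b).symm, ⟨u⟩⟩

end swGconn

lemma exists_adj_of_connected {n : ℕ} {G : SimpleGraph (Fin n)} (hG : G.Connected)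
    {a b : Fin n} (hab : a ≠ b) : ∃ c, G.Adj a c := by
  obtain ⟨p⟩ := hG.preconnected a b
  cases p with
  | nil => exact absurd rfl hab
  | cons h q => exact ⟨_, h⟩

lemma exists_W {n : ℕ} {G : SimpleGraph (Fin n)} (hG : G.Connected) {u v : Fin n}
    (huv : u ≠ v) (hd : deg G u < deg G v) :
    ∃ W : Finset (Fin n), W.card = deg G v - deg G u ∧
      (∀ w ∈ W, G.Adj v w ∧ ¬ G.Adj u w ∧ w ≠ u) ∧
      (swG G u v W).Reachable v u := by
  set Nu := univ.filter (fun w => G.Adj u w) with hNu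
  set Nv := univ.filter (fun w => G.Adj v w) with hNv
  set S0 := Nv \ (Nu ∪ {u}) with hS0def
  set k := deg G v - deg G u with hk
  have hdu : deg G u = Nu.card := deg_eq_card G u
  have hdv : deg G v = Nv.card := deg_eq_card G v
  have hS0mem : ∀ w ∈ S0, G.Adj v w ∧ ¬ G.Adj u w ∧ w ≠ u := by
    intro w hw
    simp only [hS0def, Finset.mem_sdiff, Finset.mem_union, Finset.mem_singleton, hNv, hNu,
      Finset.mem_filter, Finset.mem_univ, true_and] at hw
    push_neg at hw
    exact ⟨hw.1, hw.2.1, hw.2.2⟩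
  -- cardinality bound : k ≤ S0.card
  have hinter : (Nv ∩ (Nu ∪ {u})).card ≤ Nu.card := by
    apply Finset.card_le_card_of_injOn (fun w => if w = u then v else w)
    · intro w hw
      simp only [Finset.mem_coe, Finset.mem_inter, Finset.mem_union, Finset.mem_singleton, hNv, hNu,
        Finset.mem_filter, Finset.mem_univ, true_and] at hw ⊢
      by_cases hwu : w = u
      · subst hwu
        simp only [if_pos rfl]
        exact hw.1.symm
      · rw [if_neg hwu]
        rcases hw.2 with h | h
        · exact h
        · exact absurd h hwu
    · intro w1 h1 w2 h2 heq
      simp only [Finset.mem_coe, Finset.mem_inter, hNv, Finset.mem_filter, Finset.mem_univ,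
        true_and] at h1 h2
      dsimp only at heq
      by_cases e1 : w1 = u
      · by_cases e2 : w2 = u
        · rw [e1, e2]
        · rw [if_pos e1, if_neg e2] at heq
          have := h2.1
          rw [← heq] at this
          exact absurd this (G.loopless.irrefl v)
      · by_cases e2 : w2 = u
        · rw [if_neg e1, if_pos e2] at heq
          have := h1.1
          rw [heq] at this
          exact absurd this (G.loopless.irrefl v)
        · rw [if_neg e1, if_neg e2] at heq
          exact heq
  have hS0card : k ≤ S0.card := by
    have h := Finset.card_sdiff_add_card_inter Nv (Nu ∪ {u})
    rw [← hS0def] at h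
    omega
  by_cases hA : G.Adj u v
  · obtain ⟨W, hWsub, hWcard⟩ := Finset.exists_subset_card_eq hS0card
    have hWmem : ∀ w ∈ W, G.Adj v w ∧ ¬ G.Adj u w ∧ w ≠ u := fun w hw => hS0mem w (hWsub hw)
    refine ⟨W, hWcard, hWmem, ?_⟩
    have : (swG G u v W).Adj v u :=
      (swG_adj_v huv hWmem u).mpr ⟨hA.symm, swG_u_notmem hWmem⟩
    exact this.reachable
  · by_cases hB : ∃ y, G.Adj u y ∧ G.Adj v y
    · obtain ⟨W, hWsub, hWcard⟩ := Finset.exists_subset_card_eq hS0card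
      have hWmem : ∀ w ∈ W, G.Adj v w ∧ ¬ G.Adj u w ∧ w ≠ u := fun w hw => hS0mem w (hWsub hw)
      obtain ⟨y, hy1, hy2⟩ := hB
      refine ⟨W, hWcard, hWmem, ?_⟩
      have hyW : y ∉ W := fun h => (hWmem y h).2.1 hy1
      have h1 : (swG G u v W).Adj v y := (swG_adj_v huv hWmem y).mpr ⟨hy2, hyW⟩
      have h2 : (swG G u v W).Adj u y := (swG_adj_u huv hWmem y).mpr (Or.inl hy1)
      exact ⟨SimpleGraph.Walk.cons h1 h2.symm.toWalk⟩
    · -- no common neighbour, u not adjacent v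
      push_neg at hB
      obtain ⟨p0⟩ := hG.preconnected v u
      obtain ⟨p, hp⟩ := p0.toPath
      revert hp
      cases p with
      | nil =>
        intro hp
        exact absurd rfl huv
      | cons h q =>
        intro hp
        rename_i y
        have hp' := (SimpleGraph.Walk.cons_isPath_iff h q).mp hp
        have hvq : v ∉ q.support := hp'.2
        -- here S0 = Nv
        have hS0eq : S0 = Nv := by
          rw [hS0def]
          apply Finset.sdiff_eq_self_of_disjoint
          rw [Finset.disjoint_left]
          intro w hw hw2
          simp only [hNv, Finset.mem_filter, Finset.mem_univ, true_and] at hw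
          simp only [Finset.mem_union, Finset.mem_singleton, hNu, Finset.mem_filter,
            Finset.mem_univ, true_and] at hw2
          rcases hw2 with h2 | h2
          · exact hB w h2 hw
          · subst h2
            exact hA hw.symm
        have hdu1 : 1 ≤ deg G u := by
          obtain ⟨c, hc⟩ := exists_adj_of_connected hG huv
          rw [hdu]
          apply Finset.card_pos.mpr ⟨c, ?_⟩
          simp only [hNu, Finset.mem_filter, Finset.mem_univ, true_and]
          exact hc
        have hymem : y ∈ Nv := by
          simp only [hNv, Finset.mem_filter, Finset.mem_univ, true_and]
          exact h
        have hcard2 : k ≤ (S0 \ {y}).card := by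
          rw [hS0eq]
          have := Finset.card_sdiff_of_subset (Finset.singleton_subset_iff.mpr hymem)
          simp only [Finset.card_singleton] at this
          omega
        obtain ⟨W, hWsub, hWcard⟩ := Finset.exists_subset_card_eq hcard2
        have hWsub0 : W ⊆ S0 := hWsub.trans (Finset.sdiff_subset)
        have hWmem : ∀ w ∈ W, G.Adj v w ∧ ¬ G.Adj u w ∧ w ≠ u := fun w hw =>
          hS0mem w (hWsub0 hw)
        refine ⟨W, hWcard, hWmem, ?_⟩
        have hyW : y ∉ W := fun hcon => absurd (hWsub hcon) (by simp)
        have h1 : (swG G u v W).Adj v y := (swG_adj_v huv hWmem y).mpr ⟨h, hyW⟩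
        exact h1.reachable.trans (swG_reach_of_walk_avoid huv hWmem q hvq)

section Rayleigh
variable {m : ℕ} [NeZero m] (M : Matrix (Fin m) (Fin m) ℝ)

noncomputable def topEig (hM : M.IsHermitian) : ℝ := Finset.univ.sup' (univ_nonempty) hM.eigenvalues

variable {M}

lemma dot_star_mulVec (A : Matrix (Fin m) (Fin m) ℝ) (x z : Fin m → ℝ) :
    x ⬝ᵥ (A *ᵥ z) = ((star A) *ᵥ x) ⬝ᵥ z := by
  rw [Matrix.dotProduct_mulVec, Matrix.star_eq_conjTranspose,
    Matrix.conjTranspose_eq_transpose_of_trivial, ← Matrix.mulVec_transpose]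

lemma quad_eq (hM : M.IsHermitian) (x : Fin m → ℝ) :
    x ⬝ᵥ (M *ᵥ x) = ∑ i, hM.eigenvalues i *
      ((star (hM.eigenvectorUnitary : Matrix (Fin m) (Fin m) ℝ) *ᵥ x) i)^2 := by
  set U := (hM.eigenvectorUnitary : Matrix (Fin m) (Fin m) ℝ)
  set y := (star U) *ᵥ x with hy
  have hst : M = U * diagonal hM.eigenvalues * star U := by simpa using hM.spectral_theorem
  calc x ⬝ᵥ (M *ᵥ x) = x ⬝ᵥ (U *ᵥ (diagonal hM.eigenvalues *ᵥ y)) := by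
        conv_lhs => rw [hst]
        rw [← Matrix.mulVec_mulVec, ← Matrix.mulVec_mulVec]
    _ = y ⬝ᵥ (diagonal hM.eigenvalues *ᵥ y) := by rw [dot_star_mulVec]
    _ = ∑ i, hM.eigenvalues i * (y i)^2 := by
        simp [dotProduct, Matrix.mulVec_diagonal]; ring_nf
        exact Finset.sum_congr rfl (fun i _ => by ring)

lemma norm_eq (hM : M.IsHermitian) (x : Fin m → ℝ) :
    x ⬝ᵥ x = ∑ i, ((star (hM.eigenvectorUnitary : Matrix (Fin m) (Fin m) ℝ) *ᵥ x) i)^2 := by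
  set U := (hM.eigenvectorUnitary : Matrix (Fin m) (Fin m) ℝ)
  set y := (star U) *ᵥ x with hy
  have h1 : U * star U = 1 := (Matrix.mem_unitaryGroup_iff).mp hM.eigenvectorUnitary.2
  calc x ⬝ᵥ x = x ⬝ᵥ ((U * star U) *ᵥ x) := by rw [h1, Matrix.one_mulVec]
    _ = x ⬝ᵥ (U *ᵥ y) := by rw [← Matrix.mulVec_mulVec]
    _ = y ⬝ᵥ y := by rw [dot_star_mulVec]
    _ = ∑ i, (y i)^2 := by simp [dotProduct, pow_two]

lemma recover (hM : M.IsHermitian) (x : Fin m → ℝ) :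
    (hM.eigenvectorUnitary : Matrix (Fin m) (Fin m) ℝ) *ᵥ
      ((star (hM.eigenvectorUnitary : Matrix (Fin m) (Fin m) ℝ)) *ᵥ x) = x := by
  have h1 : (hM.eigenvectorUnitary : Matrix (Fin m) (Fin m) ℝ) *
      star (hM.eigenvectorUnitary : Matrix (Fin m) (Fin m) ℝ) = 1 :=
    (Matrix.mem_unitaryGroup_iff).mp hM.eigenvectorUnitary.2
  rw [Matrix.mulVec_mulVec, h1, Matrix.one_mulVec]

lemma topEig_le (hM : M.IsHermitian) (t : ℝ) (ht : ∃ x : Fin m → ℝ, x ≠ 0 ∧ M *ᵥ x = t • x) :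
    t ≤ topEig M hM := by
  obtain ⟨x, hx0, hxe⟩ := ht
  have hxx : 0 < x ⬝ᵥ x := by
    have : ∃ i, x i ≠ 0 := Function.ne_iff.mp hx0
    obtain ⟨i, hi⟩ := this
    have : (0:ℝ) < ∑ j, x j * x j := by
      apply Finset.sum_pos' (fun j _ => mul_self_nonneg _)
      exact ⟨i, Finset.mem_univ i, mul_self_pos.mpr hi⟩
    simpa [dotProduct] using this
  have hq : x ⬝ᵥ (M *ᵥ x) = t * (x ⬝ᵥ x) := by
    rw [hxe]; simp [dotProduct, Finset.mul_sum]
    exact Finset.sum_congr rfl (fun i _ => by ring)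
  have hle : x ⬝ᵥ (M *ᵥ x) ≤ topEig M hM * (x ⬝ᵥ x) := by
    rw [quad_eq hM x, norm_eq hM x, Finset.mul_sum]
    apply Finset.sum_le_sum
    intro i _
    have h1 : hM.eigenvalues i ≤ topEig M hM := Finset.le_sup' _ (Finset.mem_univ i)
    have h2 : (0:ℝ) ≤ _ ^ 2 := sq_nonneg ((star (hM.eigenvectorUnitary : Matrix (Fin m) (Fin m) ℝ) *ᵥ x) i)
    exact mul_le_mul_of_nonneg_right h1 h2
  nlinarith

lemma topEig_mem (hM : M.IsHermitian) : ∃ x : Fin m → ℝ, x ≠ 0 ∧ M *ᵥ x = topEig M hM • x := by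
  obtain ⟨i, -, hi⟩ := Finset.exists_mem_eq_sup' (univ_nonempty) hM.eigenvalues
  refine ⟨⇑(hM.eigenvectorBasis i), ?_, ?_⟩
  · have := hM.eigenvectorBasis.orthonormal.ne_zero i
    intro h
    apply this
    ext j
    exact congrFun h j
  · rw [hM.mulVec_eigenvectorBasis i]
    rw [show topEig M hM = hM.eigenvalues i from hi]

lemma specRad_eq_topEig (hM : M.IsHermitian) : specRad M = topEig M hM := by
  apply IsGreatest.csSup_eq
  constructor
  · exact topEig_mem hM
  · intro t ht
    exact topEig_le hM t ht

lemma rayleigh_le (hM : M.IsHermitian) (x : Fin m → ℝ) (hx : x ⬝ᵥ x = 1) :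
    x ⬝ᵥ (M *ᵥ x) ≤ specRad M := by
  rw [specRad_eq_topEig hM, quad_eq hM x]
  have hn : (∑ i, ((star (hM.eigenvectorUnitary : Matrix (Fin m) (Fin m) ℝ) *ᵥ x) i)^2) = 1 := by
    rw [← norm_eq hM x]; exact hx
  calc (∑ i, hM.eigenvalues i * ((star (hM.eigenvectorUnitary : Matrix (Fin m) (Fin m) ℝ) *ᵥ x) i)^2)
      ≤ ∑ i, topEig M hM * ((star (hM.eigenvectorUnitary : Matrix (Fin m) (Fin m) ℝ) *ᵥ x) i)^2 := by
        apply Finset.sum_le_sum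
        intro i _
        exact mul_le_mul_of_nonneg_right (Finset.le_sup' _ (Finset.mem_univ i)) (sq_nonneg _)
    _ = topEig M hM := by rw [← Finset.mul_sum, hn, mul_one]

lemma rayleigh_eq_imp (hM : M.IsHermitian) (x : Fin m → ℝ) (hx : x ⬝ᵥ x = 1)
    (heq : x ⬝ᵥ (M *ᵥ x) = specRad M) : M *ᵥ x = specRad M • x := by
  set U := (hM.eigenvectorUnitary : Matrix (Fin m) (Fin m) ℝ)
  set y := (star U) *ᵥ x with hy
  set μ := topEig M hM with hμ
  have hsr : specRad M = μ := specRad_eq_topEig hM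
  have hn : (∑ i, (y i)^2) = 1 := by rw [← norm_eq hM x]; exact hx
  have hq : (∑ i, hM.eigenvalues i * (y i)^2) = μ := by
    rw [← quad_eq hM x, heq, hsr]
  have hz : ∑ i, (μ - hM.eigenvalues i) * (y i)^2 = 0 := by
    have : ∑ i, (μ - hM.eigenvalues i) * (y i)^2
        = μ * (∑ i, (y i)^2) - ∑ i, hM.eigenvalues i * (y i)^2 := by
      rw [Finset.mul_sum, ← Finset.sum_sub_distrib]
      exact Finset.sum_congr rfl (fun i _ => by ring)
    rw [this, hn, hq, mul_one, sub_self]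
  have hterm : ∀ i ∈ Finset.univ, (μ - hM.eigenvalues i) * (y i)^2 = 0 := by
    rw [← Finset.sum_eq_zero_iff_of_nonneg]
    · exact hz
    · intro i _
      have : hM.eigenvalues i ≤ μ := Finset.le_sup' _ (Finset.mem_univ i)
      have := sq_nonneg (y i)
      nlinarith
  have hdiag : diagonal hM.eigenvalues *ᵥ y = μ • y := by
    funext i
    have h := hterm i (Finset.mem_univ i)
    have : hM.eigenvalues i * y i = μ * y i := by
      rcases mul_eq_zero.mp h with h1 | h2
      · have : hM.eigenvalues i = μ := by linarith [sub_eq_zero.mp h1]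
        rw [this]
      · have : y i = 0 := by
          have := sq_eq_zero_iff.mp h2; exact this
        rw [this, mul_zero, mul_zero]
    simpa [Matrix.mulVec_diagonal] using this
  have hst : M = U * diagonal hM.eigenvalues * star U := by simpa using hM.spectral_theorem
  have : M *ᵥ x = U *ᵥ (diagonal hM.eigenvalues *ᵥ y) := by
    conv_lhs => rw [hst]
    rw [← Matrix.mulVec_mulVec, ← Matrix.mulVec_mulVec]
  rw [this, hdiag, Matrix.mulVec_smul, recover hM x, hsr]

end Rayleigh

section sums
variable {n : ℕ} (X : Fin n → ℝ)

lemma dsum_expand (M : Matrix (Fin n) (Fin n) ℝ) :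
    X ⬝ᵥ (M *ᵥ X) = ∑ i, ∑ j, X i * (M i j * X j) := by
  simp [dotProduct, Matrix.mulVec, Finset.mul_sum]

lemma sum_ite_mem (W : Finset (Fin n)) (f : Fin n → ℝ) :
    (∑ j, if j ∈ W then f j else 0) = ∑ j ∈ W, f j := by
  rw [Finset.sum_ite_mem, Finset.univ_inter]

lemma sum2_single (c : ℝ) (p q : Fin n) :
    ∑ i, ∑ j, X i * ((if i = p ∧ j = q then c else 0) * X j) = c * X p * X q := by
  have h : ∀ i, (∑ j, X i * ((if i = p ∧ j = q then c else 0) * X j))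
      = if i = p then c * X i * X q else 0 := by
    intro i
    by_cases hip : i = p
    · rw [if_pos hip]
      have h2 : ∀ j, X i * ((if i = p ∧ j = q then c else 0) * X j)
          = if j = q then c * X i * X j else 0 := by
        intro j
        by_cases hj : j = q
        · rw [if_pos ⟨hip, hj⟩, if_pos hj]; ring
        · rw [if_neg (fun h => hj h.2), if_neg hj]; ring
      rw [Finset.sum_congr rfl (fun j _ => h2 j), Finset.sum_ite_eq' univ q
        (fun j => c * X i * X j), if_pos (Finset.mem_univ q)]
    · rw [if_neg hip]
      apply Finset.sum_eq_zero
      intro j _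
      rw [if_neg (fun h => hip h.1)]; ring
  rw [Finset.sum_congr rfl (fun i _ => h i), Finset.sum_ite_eq' univ p
    (fun i => c * X i * X q), if_pos (Finset.mem_univ p)]

lemma sum2_row (c : ℝ) (p : Fin n) (W : Finset (Fin n)) :
    ∑ i, ∑ j, X i * ((if i = p ∧ j ∈ W then c else 0) * X j)
      = c * X p * ∑ w ∈ W, X w := by
  have h : ∀ i, (∑ j, X i * ((if i = p ∧ j ∈ W then c else 0) * X j))
      = if i = p then c * X i * ∑ w ∈ W, X w else 0 := by
    intro i
    by_cases hip : i = p
    · rw [if_pos hip]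
      have h2 : ∀ j, X i * ((if i = p ∧ j ∈ W then c else 0) * X j)
          = if j ∈ W then c * X i * X j else 0 := by
        intro j
        by_cases hj : j ∈ W
        · rw [if_pos ⟨hip, hj⟩, if_pos hj]; ring
        · rw [if_neg (fun h => hj h.2), if_neg hj]; ring
      rw [Finset.sum_congr rfl (fun j _ => h2 j)]
      rw [show (∑ j, if j ∈ W then c * X i * X j else 0) = ∑ j ∈ W, c * X i * X j
        from sum_ite_mem W _]
      rw [Finset.mul_sum]
    · rw [if_neg hip]
      apply Finset.sum_eq_zero
      intro j _
      rw [if_neg (fun h => hip h.1)]; ring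
  rw [Finset.sum_congr rfl (fun i _ => h i), Finset.sum_ite_eq' univ p
    (fun i => c * X i * ∑ w ∈ W, X w), if_pos (Finset.mem_univ p)]

lemma sum2_col (c : ℝ) (p : Fin n) (W : Finset (Fin n)) :
    ∑ i, ∑ j, X i * ((if j = p ∧ i ∈ W then c else 0) * X j)
      = c * X p * ∑ w ∈ W, X w := by
  have h : ∀ i, (∑ j, X i * ((if j = p ∧ i ∈ W then c else 0) * X j))
      = if i ∈ W then c * X i * X p else 0 := by
    intro i
    by_cases hiW : i ∈ W
    · rw [if_pos hiW]
      have h2 : ∀ j, X i * ((if j = p ∧ i ∈ W then c else 0) * X j)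
          = if j = p then c * X i * X j else 0 := by
        intro j
        by_cases hj : j = p
        · rw [if_pos ⟨hj, hiW⟩, if_pos hj]; ring
        · rw [if_neg (fun h => hj h.1), if_neg hj]; ring
      rw [Finset.sum_congr rfl (fun j _ => h2 j), Finset.sum_ite_eq' univ p
        (fun j => c * X i * X j), if_pos (Finset.mem_univ p)]
    · rw [if_neg hiW]
      apply Finset.sum_eq_zero
      intro j _
      rw [if_neg (fun h => hiW h.2)]; ring
  rw [Finset.sum_congr rfl (fun i _ => h i)]
  rw [show (∑ i, if i ∈ W then c * X i * X p else 0) = ∑ i ∈ W, c * X i * X p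
    from sum_ite_mem W _]
  rw [Finset.mul_sum]
  exact Finset.sum_congr rfl (fun i _ => by ring)

end sums


lemma aalpha_isHermitian {n : ℕ} (G : SimpleGraph (Fin n)) (α : ℝ) :
    (Aalpha G α).IsHermitian := by
  rw [Matrix.IsHermitian, Matrix.conjTranspose_eq_transpose_of_trivial]
  ext i j
  simp only [Matrix.transpose_apply, Aalpha]
  by_cases hij : i = j
  · subst hij; rfl
  · rw [if_neg (Ne.symm hij), if_neg hij, G.adj_comm]

theorem stmt_3 {n : ℕ} (G : SimpleGraph (Fin n)) (hG : G.Connected)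
    (α : ℝ) (hα0 : 0 ≤ α) (hα1 : α < 1)
    (hmax : ∀ H : SimpleGraph (Fin n), H.Connected →
      (∃ e : Fin n ≃ Fin n, ∀ i, deg H (e i) = deg G i) →
      specRad (Aalpha H α) ≤ specRad (Aalpha G α))
    (X : Fin n → ℝ) (hXpos : ∀ i, 0 < X i) (hXunit : ∑ i, X i ^ 2 = 1)
    (hXeig : (Aalpha G α) *ᵥ X = specRad (Aalpha G α) • X) :
    (∀ u v : Fin n, X v ≤ X u → deg G v ≤ deg G u) ∧
    (∀ u v : Fin n, X u = X v → deg G u = deg G v) := by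
  have key : ∀ u v : Fin n, X v ≤ X u → deg G v ≤ deg G u := by
    intro u v hx
    by_contra hcon
    push_neg at hcon
    have huv : u ≠ v := by rintro rfl; exact lt_irrefl _ hcon
    haveI : NeZero n := ⟨by have := u.isLt; omega⟩
    obtain ⟨W, hWcard, hWmem, hreach⟩ := exists_W hG huv hcon
    have hconn := swG_connected huv hWmem hG hreach
    have hWu : u ∉ W := swG_u_notmem hWmem
    have hWv : v ∉ W := swG_v_notmem hWmem
    have hWpos : 0 < W.card := by omega
    have hWne : W.Nonempty := Finset.card_pos.mp hWpos
    have hkeq : deg G u + W.card = deg G v := by omega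
    have hdegHu : deg (swG G u v W) u = deg G v := by
      rw [swG_deg_u huv hWmem]; omega
    have hdegHv : deg (swG G u v W) v = deg G u := by
      rw [swG_deg_v huv hWmem]; omega
    have hperm : ∃ e : Fin n ≃ Fin n, ∀ i, deg (swG G u v W) (e i) = deg G i := by
      refine ⟨Equiv.swap u v, fun i => ?_⟩
      by_cases hiu : i = u
      · subst hiu; rw [Equiv.swap_apply_left]; exact hdegHv
      by_cases hiv : i = v
      · subst hiv; rw [Equiv.swap_apply_right]; exact hdegHu
      rw [Equiv.swap_apply_of_ne_of_ne hiu hiv]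
      exact swG_deg_other huv hWmem hiu hiv
    have hle := hmax (swG G u v W) hconn hperm
    set ρ := specRad (Aalpha G α) with hρ
    set K := (W.card : ℝ) with hK
    set S := ∑ w ∈ W, X w with hSdef
    have hSpos : 0 < S := Finset.sum_pos (fun w _ => hXpos w) hWne
    have h1α : (0:ℝ) < 1 - α := by linarith
    have hKpos : (0:ℝ) < K := by rw [hK]; exact_mod_cast hWpos
    have hcast : ((deg G v : ℕ) : ℝ) = ((deg G u : ℕ) : ℝ) + K := by
      rw [hK]; exact_mod_cast hkeq.symm
    -- pointwise matrix identity
    have hmat : ∀ i j, Aalpha (swG G u v W) α i j = Aalpha G α i j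
        + (if i = u ∧ j = u then α * K else 0)
        - (if i = v ∧ j = v then α * K else 0)
        + (if i = u ∧ j ∈ W then 1 - α else 0)
        + (if j = u ∧ i ∈ W then 1 - α else 0)
        - (if i = v ∧ j ∈ W then 1 - α else 0)
        - (if j = v ∧ i ∈ W then 1 - α else 0) := by
      intro i j
      simp only [Aalpha]
      by_cases hij : i = j
      · subst hij
        rw [if_pos rfl, if_pos rfl]
        by_cases hiu : i = u
        · subst hiu
          rw [hdegHu, if_pos ⟨rfl, rfl⟩, if_neg (fun h => huv h.1),
            if_neg (fun h => hWu h.2), if_neg (fun h => huv h.1), hcast]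
          ring
        · by_cases hiv : i = v
          · subst hiv
            rw [hdegHv, if_neg (fun h => huv h.1.symm), if_pos ⟨rfl, rfl⟩,
              if_neg (fun h => huv h.1.symm), if_neg (fun h => hWv h.2), hcast]
            ring
          · rw [swG_deg_other huv hWmem hiu hiv, if_neg (fun h => hiu h.1),
              if_neg (fun h => hiv h.1), if_neg (fun h => hiu h.1),
              if_neg (fun h => hiv h.1)]
            ring
      · rw [if_neg hij, if_neg hij]
        by_cases hc1 : i = u ∧ j ∈ W
        · obtain ⟨hiu, hjW⟩ := hc1
          have hadj : (swG G u v W).Adj i j := by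
            rw [hiu]; exact (swG_adj_u huv hWmem j).mpr (Or.inr hjW)
          have hgadj : ¬ G.Adj i j := by
            rw [hiu]; exact (hWmem j hjW).2.1
          rw [if_pos hadj, if_neg hgadj,
            if_neg (fun (h : i = u ∧ j = u) => (hWmem j hjW).2.2 h.2),
            if_neg (fun (h : i = v ∧ j = v) => huv (hiu.symm.trans h.1)),
            if_pos (⟨hiu, hjW⟩ : i = u ∧ j ∈ W),
            if_neg (fun (h : j = u ∧ i ∈ W) => (hWmem j hjW).2.2 h.1),
            if_neg (fun (h : i = v ∧ j ∈ W) => huv (hiu.symm.trans h.1)),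
            if_neg (fun (h : j = v ∧ i ∈ W) => (hWmem j hjW).1.ne h.1.symm)]
          ring
        · by_cases hc2 : j = u ∧ i ∈ W
          · obtain ⟨hju, hiW⟩ := hc2
            have hadj : (swG G u v W).Adj i j := by
              rw [hju]; exact ((swG_adj_u huv hWmem i).mpr (Or.inr hiW)).symm
            have hgadj : ¬ G.Adj i j := by
              rw [hju]; exact fun hg => (hWmem i hiW).2.1 hg.symm
            rw [if_pos hadj, if_neg hgadj,
              if_neg (fun (h : i = u ∧ j = u) => hij (h.1.trans hju.symm)),
              if_neg (fun (h : i = v ∧ j = v) => huv (hju.symm.trans h.2)),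
              if_neg (fun (h : i = u ∧ j ∈ W) => (hWmem j h.2).2.2 hju),
              if_pos (⟨hju, hiW⟩ : j = u ∧ i ∈ W),
              if_neg (fun (h : i = v ∧ j ∈ W) => (hWmem j h.2).2.2 hju),
              if_neg (fun (h : j = v ∧ i ∈ W) => huv (hju.symm.trans h.1))]
            ring
          · by_cases hc3 : i = v ∧ j ∈ W
            · obtain ⟨hiv, hjW⟩ := hc3
              have hadj : ¬ (swG G u v W).Adj i j := by
                rw [hiv]
                exact fun hadj => ((swG_adj_v huv hWmem j).mp hadj).2 hjW
              have hgadj : G.Adj i j := by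
                rw [hiv]; exact (hWmem j hjW).1
              rw [if_neg hadj, if_pos hgadj,
                if_neg (fun (h : i = u ∧ j = u) => huv (h.1.symm.trans hiv)),
                if_neg (fun (h : i = v ∧ j = v) => hWv (h.2 ▸ hjW)),
                if_neg (fun (h : i = u ∧ j ∈ W) => huv (h.1.symm.trans hiv)),
                if_neg (fun (h : j = u ∧ i ∈ W) => (hWmem j hjW).2.2 h.1),
                if_pos (⟨hiv, hjW⟩ : i = v ∧ j ∈ W),
                if_neg (fun (h : j = v ∧ i ∈ W) => hWv (h.1 ▸ hjW))]
              ring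
            · by_cases hc4 : j = v ∧ i ∈ W
              · obtain ⟨hjv, hiW⟩ := hc4
                have hadj : ¬ (swG G u v W).Adj i j := by
                  rw [hjv]
                  exact fun hadj => ((swG_adj_v huv hWmem i).mp hadj.symm).2 hiW
                have hgadj : G.Adj i j := by
                  rw [hjv]; exact ((hWmem i hiW).1).symm
                rw [if_neg hadj, if_pos hgadj,
                  if_neg (fun (h : i = u ∧ j = u) => huv (h.2.symm.trans hjv)),
                  if_neg (fun (h : i = v ∧ j = v) => hWv (h.1 ▸ hiW)),
                  if_neg (fun (h : i = u ∧ j ∈ W) => hWv (hjv ▸ h.2)),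
                  if_neg (fun (h : j = u ∧ i ∈ W) => huv (h.1.symm.trans hjv)),
                  if_neg (fun (h : i = v ∧ j ∈ W) => hWv (hjv ▸ h.2)),
                  if_pos (⟨hjv, hiW⟩ : j = v ∧ i ∈ W)]
                ring
              · have hiff : (swG G u v W).Adj i j ↔ G.Adj i j := by
                  constructor
                  · rintro ⟨hne, ⟨hg, -, -⟩ | ⟨ha, hb⟩ | ⟨ha, hb⟩⟩
                    · exact hg
                    · exact absurd ⟨ha, hb⟩ hc1
                    · exact absurd ⟨ha, hb⟩ hc2
                  · intro hg
                    exact ⟨hij, Or.inl ⟨hg, fun h => hc3 ⟨h.1, h.2⟩, fun h => hc4 ⟨h.1, h.2⟩⟩⟩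
                rw [if_congr hiff rfl rfl,
                  if_neg (fun (h : i = u ∧ j = u) => hij (h.1.trans h.2.symm)),
                  if_neg (fun (h : i = v ∧ j = v) => hij (h.1.trans h.2.symm)),
                  if_neg hc1, if_neg hc2, if_neg hc3, if_neg hc4]
                ring
    -- quadratic forms
    have hXX : X ⬝ᵥ X = 1 := by
      have h : ∀ i : Fin n, X i * X i = X i ^ 2 := fun i => (sq (X i)).symm
      calc X ⬝ᵥ X = ∑ i, X i * X i := rfl
        _ = ∑ i, X i ^ 2 := Finset.sum_congr rfl (fun i _ => h i)
        _ = 1 := hXunit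
    have hqG : X ⬝ᵥ (Aalpha G α *ᵥ X) = ρ := by
      rw [hXeig]
      calc X ⬝ᵥ (ρ • X) = ρ * (X ⬝ᵥ X) := by
            simp [dotProduct, Finset.mul_sum]
            exact Finset.sum_congr rfl (fun i _ => by ring)
        _ = ρ := by rw [hXX, mul_one]
    have hqH : X ⬝ᵥ (Aalpha (swG G u v W) α *ᵥ X)
        = ρ + (α * K * (X u ^ 2 - X v ^ 2) + 2 * (1 - α) * (X u - X v) * S) := by
      rw [dsum_expand]
      calc ∑ i, ∑ j, X i * (Aalpha (swG G u v W) α i j * X j)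
          = ∑ i, ∑ j, (X i * (Aalpha G α i j * X j)
            + X i * ((if i = u ∧ j = u then α * K else 0) * X j)
            - X i * ((if i = v ∧ j = v then α * K else 0) * X j)
            + X i * ((if i = u ∧ j ∈ W then 1 - α else 0) * X j)
            + X i * ((if j = u ∧ i ∈ W then 1 - α else 0) * X j)
            - X i * ((if i = v ∧ j ∈ W then 1 - α else 0) * X j)
            - X i * ((if j = v ∧ i ∈ W then 1 - α else 0) * X j)) := by
            refine Finset.sum_congr rfl (fun i _ => Finset.sum_congr rfl (fun j _ => ?_))
            rw [hmat i j]; ring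
        _ = ρ + (α * K * (X u ^ 2 - X v ^ 2) + 2 * (1 - α) * (X u - X v) * S) := by
            simp only [Finset.sum_add_distrib, Finset.sum_sub_distrib]
            rw [← dsum_expand, hqG, sum2_single, sum2_single, sum2_row, sum2_col,
              sum2_row, sum2_col]
            ring
    have hherm : (Aalpha (swG G u v W) α).IsHermitian := aalpha_isHermitian _ α
    have hray := rayleigh_le hherm X hXX
    have hΔ : 0 ≤ α * K * (X u ^ 2 - X v ^ 2) + 2 * (1 - α) * (X u - X v) * S := by
      have e0 : (0:ℝ) ≤ K := hKpos.le
      have e1 : 0 ≤ α * K * (X u ^ 2 - X v ^ 2) := by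
        apply mul_nonneg (mul_nonneg hα0 e0)
        nlinarith [hXpos v, hXpos u]
      have e2 : 0 ≤ 2 * (1 - α) * (X u - X v) * S := by
        apply mul_nonneg (mul_nonneg (mul_nonneg (by norm_num) h1α.le) (by linarith)) hSpos.le
      linarith
    have hΔ0 : α * K * (X u ^ 2 - X v ^ 2) + 2 * (1 - α) * (X u - X v) * S = 0 := by
      rw [hqH] at hray
      linarith
    have hsreq : specRad (Aalpha (swG G u v W) α) = ρ := by
      apply le_antisymm hle
      rw [hqH, hΔ0, add_zero] at hray
      exact hray
    have heig2 : Aalpha (swG G u v W) α *ᵥ X = ρ • X := by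
      have h := rayleigh_eq_imp hherm X hXX (by rw [hqH, hΔ0, add_zero, hsreq])
      rw [hsreq] at h
      exact h
    have hcoordH : (Aalpha (swG G u v W) α *ᵥ X) u = ρ * X u := by
      rw [heig2]; simp
    have hcoordG : (Aalpha G α *ᵥ X) u = ρ * X u := by
      rw [hXeig]; simp
    have hrow : (Aalpha (swG G u v W) α *ᵥ X) u
        = (Aalpha G α *ᵥ X) u + (α * K * X u + (1 - α) * S) := by
      have hmv : ∀ (M : Matrix (Fin n) (Fin n) ℝ), (M *ᵥ X) u = ∑ j, M u j * X j := by
        intro M; rfl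
      rw [hmv, hmv]
      calc ∑ j, Aalpha (swG G u v W) α u j * X j
          = ∑ j, (Aalpha G α u j * X j
            + (if j = u then α * K else 0) * X j
            + (if j ∈ W then 1 - α else 0) * X j) := by
            refine Finset.sum_congr rfl (fun j _ => ?_)
            rw [hmat u j]
            by_cases hju : j = u
            · have hjW : j ∉ W := fun h => hWu (hju ▸ h)
              rw [if_pos ⟨rfl, hju⟩, if_neg (fun h => huv h.1),
                if_neg (fun h => hjW h.2), if_neg (fun h => hWu h.2),
                if_neg (fun h => huv h.1), if_neg (fun h => hWu h.2),
                if_pos hju, if_neg hjW]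
              ring
            · by_cases hjW : j ∈ W
              · rw [if_neg (fun h => hju h.2), if_neg (fun h => huv h.1),
                  if_pos ⟨rfl, hjW⟩, if_neg (fun h => hWu h.2),
                  if_neg (fun h => huv h.1), if_neg (fun h => hWu h.2),
                  if_neg hju, if_pos hjW]
                ring
              · rw [if_neg (fun h => hju h.2), if_neg (fun h => huv h.1),
                  if_neg (fun h => hjW h.2), if_neg (fun h => hWu h.2),
                  if_neg (fun h => huv h.1), if_neg (fun h => hWu h.2),
                  if_neg hju, if_neg hjW]
                ring
        _ = (∑ j, Aalpha G α u j * X j) + (α * K * X u) + ((1 - α) * S) := by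
            rw [Finset.sum_add_distrib, Finset.sum_add_distrib]
            congr 1
            · congr 1
              have h2 : ∀ j : Fin n, (if j = u then α * K else 0) * X j
                  = if j = u then α * K * X j else 0 := by
                intro j; by_cases hj : j = u <;> simp [hj]
              rw [Finset.sum_congr rfl (fun j _ => h2 j), Finset.sum_ite_eq' univ u
                (fun j => α * K * X j), if_pos (Finset.mem_univ u)]
            · have h3 : ∀ j : Fin n, (if j ∈ W then 1 - α else 0) * X j
                  = if j ∈ W then (1 - α) * X j else 0 := by
                intro j; by_cases hj : j ∈ W <;> simp [hj]
              rw [Finset.sum_congr rfl (fun j _ => h3 j),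
                show (∑ j, if j ∈ W then (1 - α) * X j else 0) = ∑ j ∈ W, (1 - α) * X j
                  from sum_ite_mem W _, ← Finset.mul_sum, hSdef]
        _ = (∑ j, Aalpha G α u j * X j) + (α * K * X u + (1 - α) * S) := by ring
    have hfin : α * K * X u + (1 - α) * S = 0 := by
      rw [hcoordH, hcoordG] at hrow
      linarith
    have hpos : 0 < α * K * X u + (1 - α) * S := by
      have e1 : 0 ≤ α * K * X u := mul_nonneg (mul_nonneg hα0 hKpos.le) (hXpos u).le
      have e2 : 0 < (1 - α) * S := mul_pos h1α hSpos
      linarith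
    linarith
  exact ⟨key, fun u v h => le_antisymm (key v u h.le) (key u v h.ge)⟩
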